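/- Let t_0 > 0 and λ ∈ ℝ. There exists a continuously differentiable function f : [0,t_0] → ℂ, not identically zero, with f(0) = 0 and −f'(t_0 − t) = λ f(t) for all t ∈ [0,t_0], if and only if sin(λ t_0) = −1, i.e. if and only if λ = 2π(n − 1/4)/t_0 for some integer n. (The positive such λ are 2π t_0^{-1}(n − 1/4), n ≥ 1, and the negative ones are −2π t_0^{-1}(n − 3/4), n ≥ 1; corresponding eigenfunctions are f(t) = sin(λ t).) -/

import Mathlib

open Set Real

private lemma exp_mul_hasDerivAt (a : ℂ) (t : ℝ) :
    HasDerivAt (fun s : ℝ => Complex.exp (a * s)) (a * Complex.exp (a * t)) t := by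
  have h1 : HasDerivAt (fun z : ℂ => Complex.exp (a * z)) (Complex.exp (a * t) * a) (t : ℂ) :=
    (Complex.hasDerivAt_exp _).comp _ (by simpa using (hasDerivAt_id (t : ℂ)).const_mul a)
  simpa [mul_comm] using h1.comp_ofReal

/-- Eigenvalues of the Hankel operator with kernel `δ'(t−t₀)`, i.e. of the problem
`−f'(t₀−t) = λ f(t)` on `[0,t₀]` with `f(0) = 0`: a nonzero eigenfunction exists if and
only if `sin(λt₀) = −1`, i.e. iff `λ = 2π(n − 1/4)/t₀` for some integer `n`. -/
theorem delta_prime_kernel_eigenvalues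
    (t₀ : ℝ) (ht₀ : 0 < t₀) (lam : ℝ) :
    ((∃ f : ℝ → ℂ, ContDiffOn ℝ 1 f (Icc 0 t₀)
        ∧ (∃ t ∈ Icc (0 : ℝ) t₀, f t ≠ 0)
        ∧ f 0 = 0
        ∧ ∀ t ∈ Icc (0 : ℝ) t₀,
            -derivWithin f (Icc 0 t₀) (t₀ - t) = (lam : ℂ) * f t)
      ↔ Real.sin (lam * t₀) = -1)
    ∧ (Real.sin (lam * t₀) = -1 ↔ ∃ n : ℤ, lam = 2 * π * ((n : ℝ) - 1 / 4) / t₀) := by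
  have ht₀' : t₀ ≠ 0 := ne_of_gt ht₀
  have hud : UniqueDiffOn ℝ (Icc (0:ℝ) t₀) := uniqueDiffOn_Icc ht₀
  have hmaps : ∀ t ∈ Icc (0:ℝ) t₀, t₀ - t ∈ Icc (0:ℝ) t₀ := by
    intro t ht
    exact ⟨by linarith [ht.2], by linarith [ht.1]⟩
  constructor
  · constructor
    · -- forward direction
      rintro ⟨f, hf, ⟨s, hs, hfs⟩, hf0, heq⟩
      have hd : DifferentiableOn ℝ f (Icc 0 t₀) := hf.differentiableOn one_ne_zero
      set c : ℝ → ℂ := fun t => derivWithin f (Icc 0 t₀) t with hc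
      have h1 : ∀ t ∈ Icc (0:ℝ) t₀, HasDerivWithinAt f (c t) (Icc 0 t₀) t :=
        fun t ht => (hd t ht).hasDerivWithinAt
      have heq2 : ∀ t ∈ Icc (0:ℝ) t₀, -c (t₀ - t) = (lam : ℂ) * f t := heq
      have heq1 : ∀ t ∈ Icc (0:ℝ) t₀, c t = -((lam : ℂ) * f (t₀ - t)) := by
        intro t ht
        have := heq (t₀ - t) (hmaps t ht)
        simp only [sub_sub_cancel] at this
        linear_combination -this
      -- derivative of the reflected function
      have h2 : ∀ t ∈ Icc (0:ℝ) t₀,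
          HasDerivWithinAt (fun s => f (t₀ - s)) (-(c (t₀ - t))) (Icc 0 t₀) t := by
        intro t ht
        have hneg : HasDerivWithinAt (fun s : ℝ => t₀ - s) (-1) (Icc (0:ℝ) t₀) t := by
          simpa using ((hasDerivWithinAt_id t (Icc (0:ℝ) t₀)).const_sub t₀)
        have := HasDerivWithinAt.scomp t (h1 _ (hmaps t ht)) hneg (fun x hx => hmaps x hx)
        exact this.congr_deriv (by simp)
      set w : ℝ → ℂ := fun t => f t + Complex.I * f (t₀ - t) with hwdef
      set z : ℝ → ℂ := fun t => f t - Complex.I * f (t₀ - t) with hzdef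
      have hw : ∀ t ∈ Icc (0:ℝ) t₀,
          HasDerivWithinAt w (Complex.I * lam * w t) (Icc 0 t₀) t := by
        intro t ht
        have H := (h1 t ht).add ((h2 t ht).const_mul Complex.I)
        refine H.congr_deriv (Eq.symm ?_)
        rw [heq1 t ht, show c (t₀ - t) = -((lam : ℂ) * f t) by
          linear_combination -heq2 t ht]
        simp only [hwdef]
        linear_combination (Complex.I_sq) * ((lam : ℂ) * f (t₀ - t))
      have hz : ∀ t ∈ Icc (0:ℝ) t₀,
          HasDerivWithinAt z (-(Complex.I * lam) * z t) (Icc 0 t₀) t := by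
        intro t ht
        have H := (h1 t ht).sub ((h2 t ht).const_mul Complex.I)
        refine H.congr_deriv (Eq.symm ?_)
        rw [heq1 t ht, show c (t₀ - t) = -((lam : ℂ) * f t) by
          linear_combination -heq2 t ht]
        simp only [hzdef]
        linear_combination ((lam : ℂ) * f (t₀ - t)) * Complex.I_sq
      -- integrate the two decoupled ODEs
      have key : ∀ (a : ℂ) (u : ℝ → ℂ),
          (∀ t ∈ Icc (0:ℝ) t₀, HasDerivWithinAt u (a * u t) (Icc 0 t₀) t) →
          ∀ x ∈ Icc (0:ℝ) t₀, u x = Complex.exp (a * x) * u 0 := by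
        intro a u hu x hx
        have hg : ∀ t ∈ Icc (0:ℝ) t₀,
            HasDerivWithinAt (fun t : ℝ => Complex.exp (-a * t) * u t) 0 (Icc 0 t₀) t := by
          intro t ht
          have H := ((exp_mul_hasDerivAt (-a) t).hasDerivWithinAt).mul (hu t ht)
          refine H.congr_deriv (Eq.symm ?_)
          ring
        have hconst := constant_of_derivWithin_zero
          (f := fun t : ℝ => Complex.exp (-a * t) * u t) (a := (0:ℝ)) (b := t₀)
          (fun t ht => (hg t ht).differentiableWithinAt)
          (fun t ht => (hg t (Ico_subset_Icc_self ht)).derivWithin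
            (hud t (Ico_subset_Icc_self ht)))
        have hx0 : Complex.exp (-a * x) * u x = u 0 := by
          have := hconst x hx
          simpa using this
        have : Complex.exp (a * x) * (Complex.exp (-a * x) * u x)
            = Complex.exp (a * x) * u 0 := by rw [hx0]
        rwa [← mul_assoc, ← Complex.exp_add, show a * x + -a * x = 0 by ring,
          Complex.exp_zero, one_mul] at this
      have hwx := key (Complex.I * lam) w hw
      have hzx := key (-(Complex.I * lam)) z hz
      have hw0 : w 0 = Complex.I * f t₀ := by simp [hwdef, hf0]
      have hz0 : z 0 = -(Complex.I * f t₀) := by simp [hzdef, hf0]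
      have ht₀m : t₀ ∈ Icc (0:ℝ) t₀ := ⟨le_of_lt ht₀, le_refl t₀⟩
      by_cases hft₀ : f t₀ = 0
      · -- then f vanishes identically, contradiction
        exfalso
        apply hfs
        have h1' := hwx s hs
        have h2' := hzx s hs
        rw [hw0, hft₀] at h1'
        rw [hz0, hft₀] at h2'
        simp only [hwdef, hzdef] at h1' h2'
        simp only [mul_zero, mul_neg, neg_zero] at h1' h2'
        linear_combination (h1' + h2') / 2
      · -- f t₀ ≠ 0 : evaluate at t₀
        have h1' := hwx t₀ ht₀m
        rw [hw0] at h1'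
        simp only [hwdef, sub_self, hf0, mul_zero, add_zero] at h1'
        -- h1' : f t₀ = exp(I λ t₀) * (I * f t₀)
        have hexp : Complex.exp (Complex.I * lam * t₀) = -Complex.I := by
          have h2 : (Complex.exp (Complex.I * ↑lam * ↑t₀) * Complex.I - 1) * f t₀ = 0 := by
            linear_combination -h1'
          rcases mul_eq_zero.1 h2 with h' | h'
          · linear_combination (-Complex.I) * h'
              + Complex.exp (Complex.I * ↑lam * ↑t₀) * Complex.I_sq
          · exact absurd h' hft₀
        -- compute sin
        have hsinC : Complex.sin ((lam * t₀ : ℝ) : ℂ) = -1 := by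
          rw [Complex.sin]
          have e1 : ((lam * t₀ : ℝ) : ℂ) * Complex.I = Complex.I * lam * t₀ := by
            push_cast; ring
          have e2 : -((lam * t₀ : ℝ) : ℂ) * Complex.I = -(Complex.I * lam * t₀) := by
            push_cast; ring
          rw [e1, e2, Complex.exp_neg, hexp]
          rw [show (-Complex.I)⁻¹ = Complex.I by rw [inv_neg, Complex.inv_I, neg_neg]]
          linear_combination Complex.I_sq
        have := hsinC
        rw [← Complex.ofReal_sin] at this
        exact_mod_cast this
    · -- reverse direction
      intro hs
      have hcos : Real.cos (lam * t₀) = 0 := by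
        nlinarith [Real.sin_sq_add_cos_sq (lam * t₀)]
      refine ⟨fun t => Complex.sin (lam * t), ?_, ⟨t₀, ⟨le_of_lt ht₀, le_refl t₀⟩, ?_⟩, by simp, ?_⟩
      · apply ContDiff.contDiffOn
        exact (Complex.contDiff_sin.restrict_scalars ℝ).comp
          (contDiff_const.mul Complex.ofRealCLM.contDiff)
      · show Complex.sin ((lam : ℂ) * (t₀ : ℂ)) ≠ 0
        rw [← Complex.ofReal_mul, ← Complex.ofReal_sin, hs]
        norm_num
      · intro t ht
        have hder : ∀ x : ℝ, HasDerivAt (fun t : ℝ => Complex.sin (lam * t))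
            ((lam : ℂ) * Complex.cos (lam * x)) x := by
          intro x
          have h1 : HasDerivAt (fun z : ℂ => Complex.sin ((lam : ℂ) * z))
              (Complex.cos ((lam : ℂ) * x) * lam) (x : ℂ) :=
            (Complex.hasDerivAt_sin _).comp _ (by simpa using (hasDerivAt_id (x : ℂ)).const_mul (lam : ℂ))
          simpa [mul_comm] using h1.comp_ofReal
        rw [((hder (t₀ - t)).hasDerivWithinAt).derivWithin (hud _ (hmaps t ht))]
        have : Complex.cos ((lam : ℂ) * (t₀ - t)) = -Complex.sin ((lam : ℂ) * t) := by
          have hc : Complex.cos ((lam : ℂ) * t₀) = 0 := by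
            rw [← Complex.ofReal_mul, ← Complex.ofReal_cos, hcos, Complex.ofReal_zero]
          have hsn : Complex.sin ((lam : ℂ) * t₀) = -1 := by
            rw [← Complex.ofReal_mul, ← Complex.ofReal_sin, hs]; simp
          have : (lam : ℂ) * (t₀ - t) = (lam : ℂ) * t₀ - (lam : ℂ) * t := by ring
          rw [this, Complex.cos_sub, hc, hsn]; ring
        rw [Complex.ofReal_sub, this]; ring
  · -- second part
    rw [Real.sin_eq_neg_one_iff]
    constructor
    · rintro ⟨k, hk⟩
      exact ⟨k, by field_simp; linarith [hk]⟩
    · rintro ⟨n, hn⟩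
      refine ⟨n, ?_⟩
      rw [hn]; field_simp; ring
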